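/- Let M = c • W with c ∈ ℂ, c ≠ 0 and W ∈ Matrix.unitaryGroup (Fin n) ℂ, and let A = U ⋆_M S ⋆_M Vᴴ be a t-SVDM of an m×p×n tensor A. Then ‖A‖_F² = ‖S‖_F² = ∑_{i=1}^{min(m,p)} ∑_{j=1}^{n} |(S j) i i|², i.e. the squared Frobenius norm of A equals the sum of the squared Frobenius norms of the singular tubes S_{i,i,:}. -/

import Mathlib

open scoped BigOperators ComplexConjugate Matrix

noncomputable section

variable {R : Type*}

/-- Mode-3 product of a third-order tensor (encoded by its frontal slices)
with a transform matrix: `(A ×₃ M) i = ∑ j, (M i j) • (A j)`. -/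
def mode3 [RCLike R] {ι α β : Type*} [Fintype ι]
    (A : ι → Matrix α β R) (M : Matrix ι ι R) : ι → Matrix α β R :=
  fun i => ∑ j, M i j • A j

/-- Frobenius (entrywise ℓ²) norm of a matrix. -/
def fnorm [RCLike R] {α β : Type*} [Fintype α] [Fintype β] (A : Matrix α β R) : ℝ :=
  Real.sqrt (∑ a, ∑ b, ‖A a b‖ ^ 2)

/-- Frobenius norm of a tensor: `‖A‖² = ∑ i, ‖A i‖²`. -/
def tnorm [RCLike R] {ι α β : Type*} [Fintype ι] [Fintype α] [Fintype β]
    (A : ι → Matrix α β R) : ℝ :=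
  Real.sqrt (∑ i, fnorm (A i) ^ 2)

/-- The ⋆_M product: facewise product in the transform domain, then inverse transform. -/
def tprodM [RCLike R] {ι m p q : Type*} [Fintype ι] [DecidableEq ι] [Fintype p]
    (M : Matrix ι ι R) (A : ι → Matrix m p R) (B : ι → Matrix p q R) :
    ι → Matrix m q R :=
  mode3 (fun i => mode3 A M i * mode3 B M i) M⁻¹

/-- Conjugate transpose of a tensor under ⋆_M. -/
def tconj [RCLike R] {ι m p : Type*} [Fintype ι] [DecidableEq ι]
    (M : Matrix ι ι R) (A : ι → Matrix m p R) : ι → Matrix p m R :=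
  mode3 (fun i => (mode3 A M i)ᴴ) M⁻¹

/-- The identity tensor under ⋆_M. -/
def tId [RCLike R] (m : Type*) [DecidableEq m] {ι : Type*} [Fintype ι] [DecidableEq ι]
    (M : Matrix ι ι R) : ι → Matrix m m R :=
  mode3 (fun _ => (1 : Matrix m m R)) M⁻¹

/-- A square tensor `Q` is ⋆_M-unitary if `Qᴴ ⋆_M Q = Q ⋆_M Qᴴ = I`. -/
def tUnitary [RCLike R] {ι m : Type*} [Fintype ι] [DecidableEq ι] [Fintype m] [DecidableEq m]
    (M : Matrix ι ι R) (Q : ι → Matrix m m R) : Prop :=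
  tprodM M (tconj M Q) Q = tId m M ∧ tprodM M Q (tconj M Q) = tId m M

/-- A t-SVDM of `A`: a factorization `A = U ⋆_M S ⋆_M Vᴴ` with `U`, `V` ⋆_M-unitary and every
transform-domain slice `Ŝ i` diagonal with real, nonnegative, nonincreasing diagonal entries. -/
def IsTSVDM [RCLike R] {m p n : ℕ} (M : Matrix (Fin n) (Fin n) R)
    (A : Fin n → Matrix (Fin m) (Fin p) R)
    (U : Fin n → Matrix (Fin m) (Fin m) R)
    (S : Fin n → Matrix (Fin m) (Fin p) R)
    (V : Fin n → Matrix (Fin p) (Fin p) R) : Prop :=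
  A = tprodM M (tprodM M U S) (tconj M V) ∧
  tUnitary M U ∧ tUnitary M V ∧
  (∀ (i : Fin n) (a : Fin m) (b : Fin p), (a : ℕ) ≠ (b : ℕ) → mode3 S M i a b = 0) ∧
  (∀ (i : Fin n) (a : Fin m) (b : Fin p), (a : ℕ) = (b : ℕ) →
      ∃ r : ℝ, 0 ≤ r ∧ mode3 S M i a b = (r : R)) ∧
  (∀ (i : Fin n) (a a' : Fin m) (b b' : Fin p), (a : ℕ) = (b : ℕ) → (a' : ℕ) = (b' : ℕ) →
      (a : ℕ) ≤ (a' : ℕ) →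
      RCLike.re (mode3 S M i a' b') ≤ RCLike.re (mode3 S M i a b))

/-- Transform-domain slice of a truncation:
(first k columns of Û) * (leading k×k block of Ŝ) * (first k columns of V̂)ᴴ. -/
def truncSlice [RCLike R] {m p : ℕ} (k : ℕ) (Uh : Matrix (Fin m) (Fin m) R)
    (Sh : Matrix (Fin m) (Fin p) R) (Vh : Matrix (Fin p) (Fin p) R) :
    Matrix (Fin m) (Fin p) R :=
  Matrix.of fun a b =>
    ∑ j : Fin m, ∑ l : Fin p,
      if (j : ℕ) < k ∧ (l : ℕ) < k then Uh a j * Sh j l * star (Vh b l) else 0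

/-- The multi-rank-ρ truncation of a t-SVDM (use `ρ = fun _ => k` for the t-rank-k truncation). -/
def truncTensor [RCLike R] {m p n : ℕ} (M : Matrix (Fin n) (Fin n) R)
    (U : Fin n → Matrix (Fin m) (Fin m) R) (S : Fin n → Matrix (Fin m) (Fin p) R)
    (V : Fin n → Matrix (Fin p) (Fin p) R) (ρ : Fin n → ℕ) :
    Fin n → Matrix (Fin m) (Fin p) R :=
  mode3 (fun i => truncSlice (ρ i) (mode3 U M i) (mode3 S M i) (mode3 V M i)) M⁻¹

/-- The permuted tensor `Aᴾ`: `(Aᴾ c) i j = (A i) c j`. -/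
def tperm [RCLike R] {m p n : ℕ} (A : Fin n → Matrix (Fin m) (Fin p) R) :
    Fin m → Matrix (Fin n) (Fin p) R :=
  fun c => Matrix.of fun i j => A i c j

section myHelpers
open Matrix

lemma my_fnorm_sq {α β : Type*} [Fintype α] [Fintype β] (A : Matrix α β ℂ) :
    fnorm A ^ 2 = ∑ a, ∑ b, ‖A a b‖ ^ 2 := by
  rw [fnorm, Real.sq_sqrt]
  positivity

lemma my_tnorm_sq {ι α β : Type*} [Fintype ι] [Fintype α] [Fintype β]
    (A : ι → Matrix α β ℂ) : tnorm A ^ 2 = ∑ i, fnorm (A i) ^ 2 := by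
  rw [tnorm, Real.sq_sqrt]
  exact Finset.sum_nonneg fun i _ => sq_nonneg _

lemma my_mode3_apply {ι α β : Type*} [Fintype ι] (A : ι → Matrix α β ℂ)
    (M : Matrix ι ι ℂ) (i : ι) (a : α) (b : β) :
    mode3 A M i a b = ∑ j, M i j * A j a b := by
  simp [mode3, Matrix.sum_apply]

lemma my_mode3_mode3 {ι α β : Type*} [Fintype ι] (A : ι → Matrix α β ℂ)
    (M N : Matrix ι ι ℂ) : mode3 (mode3 A N) M = mode3 A (M * N) := by
  funext i
  ext a b
  simp only [my_mode3_apply, Matrix.mul_apply]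
  simp_rw [Finset.mul_sum]
  rw [Finset.sum_comm]
  simp_rw [Finset.sum_mul, mul_assoc]

lemma my_mode3_one {ι α β : Type*} [Fintype ι] [DecidableEq ι] (A : ι → Matrix α β ℂ) :
    mode3 A 1 = A := by
  funext i
  simp [mode3, Matrix.one_apply, ite_smul]

lemma my_mode3_tprodM {ι m p q : Type*} [Fintype ι] [DecidableEq ι] [Fintype p]
    {M : Matrix ι ι ℂ} (hM : M * M⁻¹ = 1)
    (A : ι → Matrix m p ℂ) (B : ι → Matrix p q ℂ) :
    mode3 (tprodM M A B) M = fun i => mode3 A M i * mode3 B M i := by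
  rw [tprodM, my_mode3_mode3, hM, my_mode3_one]

lemma my_mode3_tconj {ι m p : Type*} [Fintype ι] [DecidableEq ι]
    {M : Matrix ι ι ℂ} (hM : M * M⁻¹ = 1) (A : ι → Matrix m p ℂ) :
    mode3 (tconj M A) M = fun i => (mode3 A M i)ᴴ := by
  rw [tconj, my_mode3_mode3, hM, my_mode3_one]

lemma my_mode3_tId {ι m : Type*} [Fintype ι] [DecidableEq ι] [DecidableEq m]
    {M : Matrix ι ι ℂ} (hM : M * M⁻¹ = 1) :
    mode3 (tId m M) M = fun _ => (1 : Matrix m m ℂ) := by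
  rw [tId, my_mode3_mode3, hM, my_mode3_one]

lemma my_re_conj_mul (z : ℂ) : ((starRingEnd ℂ) z * z).re = ‖z‖ ^ 2 := by
  rw [mul_comm, Complex.mul_conj]
  simp [Complex.normSq_eq_norm_sq, ← Complex.ofReal_pow]

lemma my_fnorm_sq_trace {m p : ℕ} (X : Matrix (Fin m) (Fin p) ℂ) :
    fnorm X ^ 2 = ((Xᴴ * X).trace).re := by
  rw [my_fnorm_sq, Matrix.trace, Complex.re_sum, Finset.sum_comm]
  refine Finset.sum_congr rfl fun b _ => ?_
  simp only [Matrix.diag_apply, Matrix.mul_apply, Matrix.conjTranspose_apply,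
    Complex.re_sum, Complex.star_def]
  exact Finset.sum_congr rfl fun a _ => (my_re_conj_mul _).symm

lemma my_fnorm_sq_unitary {m p : ℕ} (Q : Matrix (Fin m) (Fin m) ℂ)
    (P : Matrix (Fin p) (Fin p) ℂ) (hQ : Qᴴ * Q = 1) (hP : Pᴴ * P = 1)
    (X : Matrix (Fin m) (Fin p) ℂ) :
    fnorm (Q * X * Pᴴ) ^ 2 = fnorm X ^ 2 := by
  rw [my_fnorm_sq_trace, my_fnorm_sq_trace]
  congr 1
  have key : (Q * X * Pᴴ)ᴴ * (Q * X * Pᴴ) = P * Xᴴ * X * Pᴴ := by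
    simp only [Matrix.conjTranspose_mul, Matrix.conjTranspose_conjTranspose,
      ← Matrix.mul_assoc]
    rw [Matrix.mul_assoc (P * Xᴴ) Qᴴ Q, hQ, Matrix.mul_one]
  rw [key, Matrix.trace_mul_comm]
  simp only [← Matrix.mul_assoc]
  rw [hP, Matrix.one_mul]

lemma my_sum_norm_sq_mulVec {n : ℕ} (N : Matrix (Fin n) (Fin n) ℂ) (r : ℝ)
    (hN : Nᴴ * N = (r : ℂ) • 1) (x : Fin n → ℂ) :
    ∑ i, ‖∑ j, N i j * x j‖ ^ 2 = r * ∑ j, ‖x j‖ ^ 2 := by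
  have key : ∑ i, (starRingEnd ℂ) (∑ j, N i j * x j) * (∑ j, N i j * x j)
      = (r : ℂ) * ∑ j, (starRingEnd ℂ) (x j) * x j := by
    have expand : ∀ i, (starRingEnd ℂ) (∑ j, N i j * x j) * (∑ j, N i j * x j)
        = ∑ j, ∑ k, ((starRingEnd ℂ) (N i j) * N i k) *
            ((starRingEnd ℂ) (x j) * x k) := by
      intro i
      rw [map_sum, Finset.sum_mul]
      refine Finset.sum_congr rfl fun j _ => ?_
      rw [Finset.mul_sum]
      refine Finset.sum_congr rfl fun k _ => ?_
      rw [RingHom.map_mul]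
      ring
    simp_rw [expand]
    rw [Finset.sum_comm]
    have hrow : ∀ j, ∑ i, ∑ k, ((starRingEnd ℂ) (N i j) * N i k) *
        ((starRingEnd ℂ) (x j) * x k)
        = (r : ℂ) * ((starRingEnd ℂ) (x j) * x j) := by
      intro j
      rw [Finset.sum_comm]
      have colsum : ∀ k, (∑ i, (starRingEnd ℂ) (N i j) * N i k) = (Nᴴ * N) j k := by
        intro k
        simp [Matrix.mul_apply, Matrix.conjTranspose_apply]
      calc ∑ k, ∑ i, ((starRingEnd ℂ) (N i j) * N i k) * ((starRingEnd ℂ) (x j) * x k)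
          = ∑ k, (Nᴴ * N) j k * ((starRingEnd ℂ) (x j) * x k) := by
            refine Finset.sum_congr rfl fun k _ => ?_
            rw [← Finset.sum_mul, colsum]
        _ = ∑ k, ((r : ℂ) • (1 : Matrix (Fin n) (Fin n) ℂ)) j k *
              ((starRingEnd ℂ) (x j) * x k) := by rw [hN]
        _ = (r : ℂ) * ((starRingEnd ℂ) (x j) * x j) := by
            simp [Matrix.smul_apply, Matrix.one_apply, ite_mul,
              Finset.sum_ite_eq' Finset.univ j, mul_assoc]
    simp_rw [hrow]
    rw [← Finset.mul_sum]
  calc ∑ i, ‖∑ j, N i j * x j‖ ^ 2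
      = (∑ i, (starRingEnd ℂ) (∑ j, N i j * x j) * (∑ j, N i j * x j)).re := by
        rw [Complex.re_sum]
        exact Finset.sum_congr rfl fun i _ => (my_re_conj_mul _).symm
    _ = ((r : ℂ) * ∑ j, (starRingEnd ℂ) (x j) * x j).re := by rw [key]
    _ = r * (∑ j, (starRingEnd ℂ) (x j) * x j).re := by
        rw [Complex.re_ofReal_mul]
    _ = r * ∑ j, ‖x j‖ ^ 2 := by
        rw [Complex.re_sum]
        congr 1
        exact Finset.sum_congr rfl fun j _ => my_re_conj_mul _

lemma my_sum_rot {α β γ M : Type*} [Fintype α] [Fintype β] [Fintype γ]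
    [AddCommMonoid M] (f : α → β → γ → M) :
    ∑ a, ∑ b, ∑ c, f a b c = ∑ b, ∑ c, ∑ a, f a b c := by
  rw [Finset.sum_comm]
  exact Finset.sum_congr rfl fun b _ => Finset.sum_comm

lemma my_tnorm_sq_mode3 {m p n : ℕ} (N : Matrix (Fin n) (Fin n) ℂ) (r : ℝ)
    (hN : Nᴴ * N = (r : ℂ) • 1) (X : Fin n → Matrix (Fin m) (Fin p) ℂ) :
    tnorm (mode3 X N) ^ 2 = r * tnorm X ^ 2 := by
  rw [my_tnorm_sq, my_tnorm_sq]
  simp_rw [my_fnorm_sq, my_mode3_apply]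
  rw [my_sum_rot (fun i a b => ‖∑ j, N i j * X j a b‖ ^ 2),
    my_sum_rot (fun i (a : Fin m) (b : Fin p) => ‖X i a b‖ ^ 2), Finset.mul_sum]
  refine Finset.sum_congr rfl fun a _ => ?_
  rw [Finset.mul_sum]
  exact Finset.sum_congr rfl fun b _ => my_sum_norm_sq_mulVec N r hN fun j => X j a b

end myHelpers

lemma my_diag_reindex {m p : ℕ} (f : Fin m → Fin p → ℝ)
    (hoff : ∀ (a : Fin m) (b : Fin p), (a : ℕ) ≠ (b : ℕ) → f a b = 0) :
    ∑ a, ∑ b, f a b = ∑ i : Fin (min m p),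
      f (Fin.castLE (min_le_left m p) i) (Fin.castLE (min_le_right m p) i) := by
  classical
  set F : ℕ → ℝ := fun k => if h : k < m ∧ k < p then f ⟨k, h.1⟩ ⟨k, h.2⟩ else 0 with hFdef
  have step1 : ∀ a : Fin m, (∑ b, f a b) = if h : (a : ℕ) < p then f a ⟨(a : ℕ), h⟩ else 0 := by
    intro a
    split_ifs with hap
    · rw [Finset.sum_eq_single (⟨(a : ℕ), hap⟩ : Fin p)]
      · intro b _ hb
        exact hoff a b fun he => hb (Fin.ext he.symm)
      · intro hmem
        exact absurd (Finset.mem_univ _) hmem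
    · exact Finset.sum_eq_zero fun b _ => hoff a b fun he => hap (he ▸ b.isLt)
  simp_rw [step1]
  have hF1 : ∀ a : Fin m, (if h : (a : ℕ) < p then f a ⟨(a : ℕ), h⟩ else 0) = F (a : ℕ) := by
    intro a
    simp only [hFdef]
    by_cases hap : (a : ℕ) < p
    · rw [dif_pos hap, dif_pos (⟨a.isLt, hap⟩ : (a : ℕ) < m ∧ (a : ℕ) < p)]
    · rw [dif_neg hap, dif_neg (fun hk : (a : ℕ) < m ∧ (a : ℕ) < p => hap hk.2)]
  simp_rw [hF1]
  rw [Fin.sum_univ_eq_sum_range F m]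
  rw [← Finset.sum_subset (Finset.range_subset_range.mpr (min_le_left m p))
      (fun k _ hnk => by
        simp only [hFdef]
        exact dif_neg fun hkk => hnk (Finset.mem_range.mpr (lt_min hkk.1 hkk.2)))]
  rw [← Fin.sum_univ_eq_sum_range F (min m p)]
  refine Finset.sum_congr rfl fun i _ => ?_
  simp only [hFdef]
  rw [dif_pos (⟨lt_of_lt_of_le i.isLt (min_le_left m p),
      lt_of_lt_of_le i.isLt (min_le_right m p)⟩ : (i : ℕ) < m ∧ (i : ℕ) < p)]
  rfl

/-- for a t-SVDM `A = U ⋆_M S ⋆_M Vᴴ` with `M = c • W`, `c ≠ 0`, `W` unitary,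
`‖A‖² = ‖S‖² = ∑_{i<min(m,p)} ∑_j |(S j) i i|²`. -/
theorem stmt3 {n m p : ℕ}
    (W : Matrix (Fin n) (Fin n) ℂ) (hW : W ∈ Matrix.unitaryGroup (Fin n) ℂ)
    (c : ℂ) (hc : c ≠ 0)
    (A : Fin n → Matrix (Fin m) (Fin p) ℂ)
    (U : Fin n → Matrix (Fin m) (Fin m) ℂ)
    (S : Fin n → Matrix (Fin m) (Fin p) ℂ)
    (V : Fin n → Matrix (Fin p) (Fin p) ℂ)
    (h : IsTSVDM (c • W) A U S V) :
    tnorm A ^ 2 = tnorm S ^ 2 ∧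
    tnorm A ^ 2 = ∑ i : Fin (min m p), ∑ j : Fin n,
      ‖S j (Fin.castLE (min_le_left m p) i) (Fin.castLE (min_le_right m p) i)‖ ^ 2 := by
  set M : Matrix (Fin n) (Fin n) ℂ := c • W with hM
  have hW1 : star W * W = 1 := hW.1
  have hW2 : W * star W = 1 := hW.2
  have hMM : M * M⁻¹ = 1 := by
    have hright : M * (c⁻¹ • Wᴴ) = 1 := by
      rw [hM, Matrix.smul_mul, Matrix.mul_smul, smul_smul, mul_inv_cancel₀ hc,
        ← Matrix.star_eq_conjTranspose, hW2, one_smul]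
    rw [Matrix.inv_eq_right_inv hright, hright]
  have hMM' : M⁻¹ * M = 1 := by
    have hright : M * (c⁻¹ • Wᴴ) = 1 := by
      rw [hM, Matrix.smul_mul, Matrix.mul_smul, smul_smul, mul_inv_cancel₀ hc,
        ← Matrix.star_eq_conjTranspose, hW2, one_smul]
    rw [Matrix.inv_eq_right_inv hright, hM, Matrix.smul_mul, Matrix.mul_smul, smul_smul,
      inv_mul_cancel₀ hc, ← Matrix.star_eq_conjTranspose, hW1, one_smul]
  have hMHM : Mᴴ * M = ((‖c‖ ^ 2 : ℝ) : ℂ) • 1 := by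
    rw [hM, Matrix.conjTranspose_smul, Matrix.smul_mul, Matrix.mul_smul, smul_smul,
      ← Matrix.star_eq_conjTranspose, hW1]
    congr 1
    rw [Complex.star_def, mul_comm, Complex.mul_conj]
    norm_cast
    simp [Complex.normSq_eq_norm_sq]
  obtain ⟨hAeq, hU, hV, hSdiag, -, -⟩ := h
  have hUhat : ∀ i, (mode3 U M i)ᴴ * mode3 U M i = 1 := by
    intro i
    have h1 : mode3 (tprodM M (tconj M U) U) M = mode3 (tId (Fin m) M) M := by rw [hU.1]
    simp only [my_mode3_tprodM hMM, my_mode3_tconj hMM, my_mode3_tId hMM] at h1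
    exact congrFun h1 i
  have hVhat : ∀ i, (mode3 V M i)ᴴ * mode3 V M i = 1 := by
    intro i
    have h1 : mode3 (tprodM M (tconj M V) V) M = mode3 (tId (Fin p) M) M := by rw [hV.1]
    simp only [my_mode3_tprodM hMM, my_mode3_tconj hMM, my_mode3_tId hMM] at h1
    exact congrFun h1 i
  have hAhat : ∀ i, mode3 A M i = mode3 U M i * mode3 S M i * (mode3 V M i)ᴴ := by
    intro i
    have h1 : mode3 A M = mode3 (tprodM M (tprodM M U S) (tconj M V)) M := by rw [hAeq]
    simp only [my_mode3_tprodM hMM, my_mode3_tconj hMM] at h1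
    simpa using congrFun h1 i
  have hc2 : (‖c‖ ^ 2 : ℝ) ≠ 0 := pow_ne_zero 2 (norm_ne_zero_iff.mpr hc)
  have hhat : tnorm (mode3 A M) ^ 2 = tnorm (mode3 S M) ^ 2 := by
    rw [my_tnorm_sq, my_tnorm_sq]
    refine Finset.sum_congr rfl fun i _ => ?_
    rw [hAhat i]
    exact my_fnorm_sq_unitary _ _ (hUhat i) (hVhat i) _
  have h1 : tnorm A ^ 2 = tnorm S ^ 2 := by
    have ha := my_tnorm_sq_mode3 M (‖c‖ ^ 2) hMHM A
    have hs := my_tnorm_sq_mode3 M (‖c‖ ^ 2) hMHM S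
    rw [ha, hs] at hhat
    exact mul_left_cancel₀ hc2 hhat
  have hSrec : S = mode3 (mode3 S M) M⁻¹ := by
    rw [my_mode3_mode3, hMM', my_mode3_one]
  have hSoff : ∀ (j : Fin n) (a : Fin m) (b : Fin p), (a : ℕ) ≠ (b : ℕ) → S j a b = 0 := by
    intro j a b hab
    conv_lhs => rw [hSrec]
    rw [my_mode3_apply]
    refine Finset.sum_eq_zero fun i _ => ?_
    rw [hSdiag i a b hab, mul_zero]
  have h2 : tnorm S ^ 2 = ∑ i : Fin (min m p), ∑ j : Fin n,
      ‖S j (Fin.castLE (min_le_left m p) i) (Fin.castLE (min_le_right m p) i)‖ ^ 2 := by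
    rw [my_tnorm_sq]
    simp_rw [my_fnorm_sq]
    have hdiag : ∀ j : Fin n, (∑ a, ∑ b, ‖S j a b‖ ^ 2)
        = ∑ i : Fin (min m p), ‖S j (Fin.castLE (min_le_left m p) i)
            (Fin.castLE (min_le_right m p) i)‖ ^ 2 := by
      intro j
      exact my_diag_reindex (fun a b => ‖S j a b‖ ^ 2)
        (fun a b hab => by
          show ‖S j a b‖ ^ 2 = 0
          rw [hSoff j a b hab, norm_zero]
          norm_num)
    simp_rw [hdiag]
    exact Finset.sum_comm
  exact ⟨h1, h1.trans h2⟩
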